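/- Gödel–Gentzen negative translation for propositional logic, giving a translation of classical logic K into intuitionistic logic J: a propositional formula φ evaluates to ⊤ under every valuation of its atoms in every Boolean algebra if and only if its negative translation φᴺ evaluates to ⊤ under every valuation of its atoms in every Heyting algebra, where the translation is defined by pᴺ = ¬¬p for atoms p, ⊥ᴺ = ⊥, (φ ∧ ψ)ᴺ = φᴺ ∧ ψᴺ, (φ ∨ ψ)ᴺ = ¬(¬φᴺ ∧ ¬ψᴺ), and (φ → ψ)ᴺ = φᴺ → ψᴺ. -/

import Mathlib

/-- Propositional formulae over a set `A` of atoms, closed under the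
connectives ⊥, ∧, ∨, →. -/
inductive PropForm (A : Type) where
  | atom : A → PropForm A
  | bot : PropForm A
  | and : PropForm A → PropForm A → PropForm A
  | or : PropForm A → PropForm A → PropForm A
  | imp : PropForm A → PropForm A → PropForm A

/-- Negation `¬φ` abbreviates `φ → ⊥`. -/
def PropForm.neg {A : Type} (φ : PropForm A) : PropForm A := .imp φ .bot

/-- The Gödel–Gentzen negative translation: `pᴺ = ¬¬p` for atoms `p`, `⊥ᴺ = ⊥`,
`(φ ∧ ψ)ᴺ = φᴺ ∧ ψᴺ`, `(φ ∨ ψ)ᴺ = ¬(¬φᴺ ∧ ¬ψᴺ)`, and `(φ → ψ)ᴺ = φᴺ → ψᴺ`. -/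
def PropForm.ntrans {A : Type} : PropForm A → PropForm A
  | .atom a => (PropForm.atom a).neg.neg
  | .bot => .bot
  | .and φ ψ => .and φ.ntrans ψ.ntrans
  | .or φ ψ => (PropForm.and φ.ntrans.neg ψ.ntrans.neg).neg
  | .imp φ ψ => .imp φ.ntrans ψ.ntrans

/-- The evaluation of a formula in a Heyting algebra `H` under a valuation
`v : A → H` of its atoms: ⊥ is the bottom element, ∧ is meet, ∨ is join, and
→ is Heyting implication. -/
def PropForm.eval {A H : Type} [HeytingAlgebra H] (v : A → H) : PropForm A → H
  | .atom a => v a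
  | .bot => ⊥
  | .and φ ψ => φ.eval v ⊓ ψ.eval v
  | .or φ ψ => φ.eval v ⊔ ψ.eval v
  | .imp φ ψ => φ.eval v ⇨ ψ.eval v


lemma ntrans_eval_bool {A B : Type} [BooleanAlgebra B] (v : A → B) (φ : PropForm A) :
    φ.ntrans.eval v = φ.eval v := by
  induction φ with
  | atom a => simp [PropForm.ntrans, PropForm.neg, PropForm.eval]
  | bot => rfl
  | and φ ψ ihφ ihψ => simp [PropForm.ntrans, PropForm.eval, ihφ, ihψ]
  | or φ ψ ihφ ihψ =>
      simp [PropForm.ntrans, PropForm.neg, PropForm.eval, ihφ, ihψ, himp_bot, compl_inf]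
  | imp φ ψ ihφ ihψ => simp [PropForm.ntrans, PropForm.eval, ihφ, ihψ]

lemma ntrans_eval_reg {A H : Type} [HeytingAlgebra H] (v : A → H) (φ : PropForm A) :
    φ.ntrans.eval v =
      ((φ.eval (fun a => Heyting.Regular.toRegular (v a)) : Heyting.Regular H) : H) := by
  induction φ with
  | atom a => simp [PropForm.ntrans, PropForm.neg, PropForm.eval, himp_bot]
  | bot => rfl
  | and φ ψ ihφ ihψ => simp [PropForm.ntrans, PropForm.eval, ihφ, ihψ]; exact (Heyting.Regular.coe_inf _ _).symm
  | or φ ψ ihφ ihψ =>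
      simp [PropForm.ntrans, PropForm.neg, PropForm.eval, ihφ, ihψ,
        Heyting.Regular.coe_sup, himp_bot, compl_sup]
  | imp φ ψ ihφ ihψ => simp [PropForm.ntrans, PropForm.eval, ihφ, ihψ]

/-- The Gödel–Gentzen negative translation translates classical logic into
intuitionistic logic: `φ` evaluates to ⊤ under every valuation in every Boolean
algebra iff its negative translation `φᴺ` evaluates to ⊤ under every valuation
in every Heyting algebra. -/
theorem godel_gentzen {A : Type} (φ : PropForm A) :
    (∀ (B : Type) [BooleanAlgebra B], ∀ v : A → B, φ.eval v = ⊤) ↔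
    (∀ (H : Type) [HeytingAlgebra H], ∀ v : A → H, φ.ntrans.eval v = ⊤) := by
  constructor
  · intro h H _ v
    rw [ntrans_eval_reg, h (Heyting.Regular H)]
    rfl
  · intro h B _ v
    rw [← ntrans_eval_bool v φ]
    exact h B v
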